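/- Edge marginals are Fourier pairs (Proposition 1): fix an edge e₀ ∈ E, and suppose Z_p ≠ 0, ψ_{e₀}(a) ≠ 0 for all a, and ψ̃_{e₀}(a) ≠ 0 for all a (so also Z_d = q^{|E|}Z_p ≠ 0). Define the primal edge marginal π_p(a) = (Σ_{x : y_{e₀}(x) = a} Π_{e∈E} ψ_e(y_e(x)) Π_{v∈V} φ_v(x(v)))/Z_p and the dual edge marginal π_d(a) = (Σ_{ỹ : ỹ(e₀) = a} Π_{e∈E} ψ̃_e(ỹ(e)) Π_{v∈V} φ̃_v(x̃_v(ỹ)))/Z_d. Then for every a ∈ ZMod q: π_p(a)/ψ_{e₀}(a) = Σ_{a'∈ZMod q} (π_d(a')/ψ̃_{e₀}(a')) · ω^{a·a'}. -/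

import Mathlib

open scoped BigOperators

/-- The character value ω^{a·b} = exp(−2πi·a·b/q). -/
noncomputable def omegaPow (q : ℕ) (a b : ZMod q) : ℂ :=
  Complex.exp (-2 * Real.pi * Complex.I * ((a.val * b.val : ℕ) : ℂ) / (q : ℂ))

/-- The discrete Fourier transform of `f : ZMod q → ℂ`. -/
noncomputable def dft (q : ℕ) [NeZero q] (f : ZMod q → ℂ) (b : ZMod q) : ℂ :=
  ∑ a : ZMod q, f a * omegaPow q a b

/-- The dual vertex variable x̃_v(yt). -/
noncomputable def dualX {V E : Type*} [Fintype E] [DecidableEq V]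
    (s t : E → V) (q : ℕ) (yt : E → ZMod q) (v : V) : ZMod q :=
  -((∑ e ∈ Finset.univ.filter (fun e => s e = v), yt e) -
     ∑ e ∈ Finset.univ.filter (fun e => t e = v), yt e)

/-- The primal partition function. -/
noncomputable def Zp {V E : Type*} [Fintype V] [Fintype E] [DecidableEq V]
    (s t : E → V) (q : ℕ) [NeZero q]
    (ψ : E → ZMod q → ℂ) (φ : V → ZMod q → ℂ) : ℂ :=
  ∑ x : V → ZMod q, (∏ e : E, ψ e (x (s e) - x (t e))) * ∏ v : V, φ v (x v)

/-- The dual partition function. -/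
noncomputable def Zd {V E : Type*} [Fintype V] [Fintype E] [DecidableEq V] [DecidableEq E]
    (s t : E → V) (q : ℕ) [NeZero q]
    (ψ : E → ZMod q → ℂ) (φ : V → ZMod q → ℂ) : ℂ :=
  ∑ yt : E → ZMod q, (∏ e : E, dft q (ψ e) (yt e)) * ∏ v : V, dft q (φ v) (dualX s t q yt v)

/- ### auxiliary character lemmas -/

noncomputable def zeta (q : ℕ) : ℂ := Complex.exp (-2 * Real.pi * Complex.I / q)
noncomputable def chi (q : ℕ) (c : ZMod q) : ℂ := zeta q ^ c.val

lemma zeta_prim (q : ℕ) [NeZero q] : IsPrimitiveRoot (zeta q) q := by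
  have h := Complex.isPrimitiveRoot_exp q (NeZero.ne q)
  have : zeta q = (Complex.exp (2 * Real.pi * Complex.I / q))⁻¹ := by
    rw [← Complex.exp_neg]
    rw [zeta]; ring_nf
  rw [this]
  exact h.inv

lemma zeta_pow_mod (q : ℕ) [NeZero q] (n : ℕ) : zeta q ^ n = zeta q ^ (n % q) := by
  conv_lhs => rw [← Nat.div_add_mod n q]
  rw [pow_add, pow_mul, (zeta_prim q).pow_eq_one, one_pow, one_mul]

lemma zeta_pow_natCast (q : ℕ) [NeZero q] (n : ℕ) : zeta q ^ n = chi q (n : ZMod q) := by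
  rw [chi, ZMod.val_natCast, zeta_pow_mod]

lemma omega_eq (q : ℕ) [NeZero q] (a b : ZMod q) : omegaPow q a b = chi q (a * b) := by
  have h1 : omegaPow q a b = zeta q ^ (a.val * b.val) := by
    rw [omegaPow, zeta, ← Complex.exp_nat_mul]
    ring_nf
  rw [h1, zeta_pow_natCast]
  congr 1
  push_cast
  simp [ZMod.natCast_val, ZMod.cast_id]

lemma chi_zero (q : ℕ) : chi q 0 = 1 := by simp [chi]

lemma chi_add (q : ℕ) [NeZero q] (c d : ZMod q) : chi q (c + d) = chi q c * chi q d := by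
  have : c + d = ((c.val + d.val : ℕ) : ZMod q) := by push_cast; simp [ZMod.natCast_val, ZMod.cast_id]
  rw [this, ← zeta_pow_natCast, pow_add, chi, chi]

lemma chi_sum (q : ℕ) [NeZero q] {ι : Type*} (s : Finset ι) (f : ι → ZMod q) :
    chi q (∑ i ∈ s, f i) = ∏ i ∈ s, chi q (f i) := by
  induction s using Finset.cons_induction with
  | empty => simp [chi_zero]
  | cons i s hi ih => rw [Finset.sum_cons, Finset.prod_cons, chi_add, ih]

lemma chi_ne_one (q : ℕ) [NeZero q] {c : ZMod q} (hc : c ≠ 0) : chi q c ≠ 1 := by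
  have h1 : 0 < c.val := by
    rcases Nat.eq_zero_or_pos c.val with h | h
    · exact absurd ((ZMod.val_eq_zero c).mp h) hc
    · exact h
  exact (zeta_prim q).pow_ne_one_of_pos_of_lt h1.ne' (ZMod.val_lt c)

lemma sum_chi_mul (q : ℕ) [NeZero q] (c : ZMod q) :
    ∑ b : ZMod q, chi q (c * b) = if c = 0 then (q : ℂ) else 0 := by
  split_ifs with h
  · simp [h, chi_zero, Finset.card_univ]
  · have key : ∑ b : ZMod q, chi q (c * b) = chi q c * ∑ b : ZMod q, chi q (c * b) := by
      conv_lhs => rw [← Fintype.sum_equiv (Equiv.addRight (1 : ZMod q)) _ (fun b => chi q (c * b)) (fun b => rfl)]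
      rw [Finset.mul_sum]
      apply Finset.sum_congr rfl
      intro b _
      simp only [Equiv.coe_addRight]
      rw [mul_add, mul_one, chi_add, mul_comm]
    have := sub_eq_zero.mpr key.symm
    rw [← sub_one_mul] at this
    rcases mul_eq_zero.mp this with h' | h'
    · exact absurd (by linear_combination h' : chi q c = 1) (chi_ne_one q h)
    · exact h'

/- ### Lemma A: vertex characters convert to edge characters -/

lemma prod_chi_dualX {V E : Type*} [Fintype V] [Fintype E] [DecidableEq V]
    (s t : E → V) (q : ℕ) [NeZero q] (x : V → ZMod q) (yt : E → ZMod q) :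
    ∏ v : V, chi q (x v * dualX s t q yt v) =
      ∏ e : E, chi q (-(x (s e) - x (t e)) * yt e) := by
  rw [← chi_sum, ← chi_sum]
  congr 1
  have h1 : ∑ v : V, x v * (∑ e ∈ Finset.univ.filter (fun e => s e = v), yt e)
      = ∑ e : E, x (s e) * yt e := by
    rw [← Finset.sum_fiberwise Finset.univ s (fun e => x (s e) * yt e)]
    refine Finset.sum_congr rfl (fun v _ => ?_)
    rw [Finset.mul_sum]
    refine Finset.sum_congr rfl (fun e he => ?_)
    rw [(Finset.mem_filter.mp he).2]
  have h2 : ∑ v : V, x v * (∑ e ∈ Finset.univ.filter (fun e => t e = v), yt e)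
      = ∑ e : E, x (t e) * yt e := by
    rw [← Finset.sum_fiberwise Finset.univ t (fun e => x (t e) * yt e)]
    refine Finset.sum_congr rfl (fun v _ => ?_)
    rw [Finset.mul_sum]
    refine Finset.sum_congr rfl (fun e he => ?_)
    rw [(Finset.mem_filter.mp he).2]
  simp only [dualX, mul_neg, neg_sub, mul_sub]
  rw [Finset.sum_sub_distrib, h1, h2, ← Finset.sum_sub_distrib]
  exact Finset.sum_congr rfl (fun e _ => by ring)

/- ### Lemma M: Zd = q^|E| * Zp for arbitrary factors -/

lemma Zd_eq_Zp {V E : Type*} [Fintype V] [Fintype E] [DecidableEq V] [DecidableEq E]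
    (s t : E → V) (q : ℕ) [NeZero q]
    (ψ : E → ZMod q → ℂ) (φ : V → ZMod q → ℂ) :
    Zd s t q ψ φ = (q : ℂ) ^ (Fintype.card E) * Zp s t q ψ φ := by
  have step1 : Zd s t q ψ φ = ∑ yt : E → ZMod q, ∑ y : E → ZMod q, ∑ x : V → ZMod q,
      ((∏ e : E, ψ e (y e)) * ∏ v : V, φ v (x v)) *
        ∏ e : E, chi q ((y e - (x (s e) - x (t e))) * yt e) := by
    unfold Zd dft
    refine Finset.sum_congr rfl (fun yt _ => ?_)
    simp only [omega_eq]
    rw [Fintype.prod_sum (fun e b => ψ e b * chi q (b * yt e)),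
        Fintype.prod_sum (fun v a => φ v a * chi q (a * dualX s t q yt v)),
        Finset.sum_mul_sum]
    refine Finset.sum_congr rfl (fun y _ => Finset.sum_congr rfl (fun x _ => ?_))
    rw [Finset.prod_mul_distrib, Finset.prod_mul_distrib, prod_chi_dualX s t q x yt]
    have hcomb : (∏ e : E, chi q (y e * yt e)) * (∏ e : E, chi q (-(x (s e) - x (t e)) * yt e))
        = ∏ e : E, chi q ((y e - (x (s e) - x (t e))) * yt e) := by
      rw [← Finset.prod_mul_distrib]
      refine Finset.prod_congr rfl (fun e _ => ?_)
      rw [← chi_add]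
      congr 1
      ring
    rw [mul_mul_mul_comm, hcomb]
  rw [step1, Finset.sum_comm]
  have step2 : ∀ y : E → ZMod q, ∑ yt : E → ZMod q, ∑ x : V → ZMod q,
      ((∏ e : E, ψ e (y e)) * ∏ v : V, φ v (x v)) *
        ∏ e : E, chi q ((y e - (x (s e) - x (t e))) * yt e)
      = ∑ x : V → ZMod q, ((∏ e : E, ψ e (y e)) * ∏ v : V, φ v (x v)) *
          ∏ e : E, (if y e - (x (s e) - x (t e)) = 0 then (q : ℂ) else 0) := by
    intro y
    rw [Finset.sum_comm]
    refine Finset.sum_congr rfl (fun x _ => ?_)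
    rw [← Finset.mul_sum]
    congr 1
    rw [← Fintype.prod_sum (fun e b => chi q ((y e - (x (s e) - x (t e))) * b))]
    exact Finset.prod_congr rfl (fun e _ => sum_chi_mul q _)
  simp only [step2]
  rw [Finset.sum_comm]
  unfold Zp
  rw [Finset.mul_sum]
  refine Finset.sum_congr rfl (fun x _ => ?_)
  -- ∑ y, (∏ ψ e (y e)) * πφ * ∏ ite = q^|E| * (∏ ψ e (edge)) * πφ
  have : ∀ y : E → ZMod q,
      ((∏ e : E, ψ e (y e)) * ∏ v : V, φ v (x v)) *
        ∏ e : E, (if y e - (x (s e) - x (t e)) = 0 then (q : ℂ) else 0)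
      = (∏ e : E, ψ e (y e) * (if y e - (x (s e) - x (t e)) = 0 then (q : ℂ) else 0)) *
          ∏ v : V, φ v (x v) := by
    intro y
    rw [Finset.prod_mul_distrib]
    ring
  simp only [this]
  rw [← Finset.sum_mul, ← Fintype.prod_sum
        (fun e b => ψ e b * (if b - (x (s e) - x (t e)) = 0 then (q : ℂ) else 0))]
  have : ∀ e : E, ∑ b : ZMod q, ψ e b * (if b - (x (s e) - x (t e)) = 0 then (q : ℂ) else 0)
      = (q : ℂ) * ψ e (x (s e) - x (t e)) := by
    intro e
    rw [Finset.sum_eq_single (x (s e) - x (t e))]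
    · simp [mul_comm]
    · intro b _ hb
      simp [sub_eq_zero, hb]
    · simp
  simp only [this]
  rw [Finset.prod_mul_distrib, Finset.prod_const, Finset.card_univ]
  ring

/- ### linearity of Zp in the e₀ edge factor -/

lemma Zp_update {V E : Type*} [Fintype V] [Fintype E] [DecidableEq V] [DecidableEq E]
    (s t : E → V) (q : ℕ) [NeZero q]
    (ψ : E → ZMod q → ℂ) (φ : V → ZMod q → ℂ) (e₀ : E) (f : ZMod q → ℂ) :
    Zp s t q (Function.update ψ e₀ f) φ =
      ∑ c : ZMod q, f c *
        ∑ x ∈ Finset.univ.filter (fun x : V → ZMod q => x (s e₀) - x (t e₀) = c),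
          (∏ e ∈ Finset.univ.erase e₀, ψ e (x (s e) - x (t e))) * ∏ v : V, φ v (x v) := by
  unfold Zp
  rw [← Finset.sum_fiberwise Finset.univ (fun x : V → ZMod q => x (s e₀) - x (t e₀))
        (fun x => (∏ e : E, Function.update ψ e₀ f e (x (s e) - x (t e))) * ∏ v : V, φ v (x v))]
  refine Finset.sum_congr rfl (fun c _ => ?_)
  rw [Finset.mul_sum]
  refine Finset.sum_congr rfl (fun x hx => ?_)
  have hc : x (s e₀) - x (t e₀) = c := (Finset.mem_filter.mp hx).2
  rw [← Finset.mul_prod_erase Finset.univ _ (Finset.mem_univ e₀), hc,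
      Function.update_self]
  have : ∏ e ∈ Finset.univ.erase e₀, Function.update ψ e₀ f e (x (s e) - x (t e))
      = ∏ e ∈ Finset.univ.erase e₀, ψ e (x (s e) - x (t e)) := by
    refine Finset.prod_congr rfl (fun e he => ?_)
    rw [Function.update_of_ne (Finset.mem_erase.mp he).1]
  rw [this, mul_assoc]

/- ### primal marginal numerator -/

lemma Np_eq {V E : Type*} [Fintype V] [Fintype E] [DecidableEq V] [DecidableEq E]
    (s t : E → V) (q : ℕ) [NeZero q]
    (ψ : E → ZMod q → ℂ) (φ : V → ZMod q → ℂ) (e₀ : E) (c : ZMod q) :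
    ∑ x ∈ Finset.univ.filter (fun x : V → ZMod q => x (s e₀) - x (t e₀) = c),
        (∏ e : E, ψ e (x (s e) - x (t e))) * ∏ v : V, φ v (x v)
    = ψ e₀ c *
      ∑ x ∈ Finset.univ.filter (fun x : V → ZMod q => x (s e₀) - x (t e₀) = c),
        (∏ e ∈ Finset.univ.erase e₀, ψ e (x (s e) - x (t e))) * ∏ v : V, φ v (x v) := by
  rw [Finset.mul_sum]
  refine Finset.sum_congr rfl (fun x hx => ?_)
  have hc : x (s e₀) - x (t e₀) = c := (Finset.mem_filter.mp hx).2
  rw [← Finset.mul_prod_erase Finset.univ _ (Finset.mem_univ e₀), hc, mul_assoc]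

/- ### the dual kernel function and its dft -/

noncomputable def hker (q : ℕ) [NeZero q] (ψ₀ : ZMod q → ℂ) (a' : ZMod q) (c : ZMod q) : ℂ :=
  (dft q ψ₀ a' / q) * chi q (-(c * a'))

lemma dft_hker (q : ℕ) [NeZero q] (ψ₀ : ZMod q → ℂ) (a' b : ZMod q) :
    dft q (hker q ψ₀ a') b = if b = a' then dft q ψ₀ a' else 0 := by
  unfold dft hker
  simp only [omega_eq]
  have : ∀ c : ZMod q, dft q ψ₀ a' / q * chi q (-(c * a')) * chi q (c * b)
      = dft q ψ₀ a' / q * chi q ((b - a') * c) := by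
    intro c
    rw [mul_assoc, ← chi_add]
    congr 2
    ring
  simp only [this]
  rw [← Finset.mul_sum, sum_chi_mul q (b - a')]
  have hq : (q : ℂ) ≠ 0 := Nat.cast_ne_zero.mpr (NeZero.ne q)
  have hdft : dft q ψ₀ a' = ∑ x : ZMod q, ψ₀ x * chi q (x * a') := by
    simp [dft, omega_eq]
  rcases eq_or_ne b a' with h | h
  · rw [if_pos (by rw [h, sub_self]), if_pos h, div_mul_cancel₀ _ hq, hdft]
  · rw [if_neg (sub_ne_zero.mpr h), if_neg h, mul_zero]

/- ### dual marginal numerator as a modified Zd -/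

lemma Nd_eq {V E : Type*} [Fintype V] [Fintype E] [DecidableEq V] [DecidableEq E]
    (s t : E → V) (q : ℕ) [NeZero q]
    (ψ : E → ZMod q → ℂ) (φ : V → ZMod q → ℂ) (e₀ : E) (a' : ZMod q) :
    ∑ yt ∈ Finset.univ.filter (fun yt : E → ZMod q => yt e₀ = a'),
        (∏ e : E, dft q (ψ e) (yt e)) * ∏ v : V, dft q (φ v) (dualX s t q yt v)
    = Zd s t q (Function.update ψ e₀ (hker q (ψ e₀) a')) φ := by
  unfold Zd
  rw [Finset.sum_filter]
  refine Finset.sum_congr rfl (fun yt _ => ?_)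
  have hprod : ∏ e : E, dft q (Function.update ψ e₀ (hker q (ψ e₀) a') e) (yt e)
      = (if yt e₀ = a' then dft q (ψ e₀) a' else 0) *
        ∏ e ∈ Finset.univ.erase e₀, dft q (ψ e) (yt e) := by
    rw [← Finset.mul_prod_erase Finset.univ _ (Finset.mem_univ e₀), Function.update_self,
        dft_hker]
    congr 1
    refine Finset.prod_congr rfl (fun e he => ?_)
    rw [Function.update_of_ne (Finset.mem_erase.mp he).1]
  rw [hprod]
  split_ifs with h
  · rw [← Finset.mul_prod_erase Finset.univ (fun e => dft q (ψ e) (yt e)) (Finset.mem_univ e₀),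
        h, mul_assoc]
  · simp

/-- Proposition 1: the primal and dual edge marginals, each divided by the corresponding
edge factor, are discrete Fourier transform pairs. -/
theorem edge_marginals_fourier_pair {V E : Type*} [Fintype V] [Fintype E]
    [DecidableEq V] [DecidableEq E]
    (s t : E → V) (q : ℕ) [NeZero q]
    (ψ : E → ZMod q → ℂ) (φ : V → ZMod q → ℂ) (e₀ : E)
    (hZp : Zp s t q ψ φ ≠ 0)
    (hψ : ∀ a : ZMod q, ψ e₀ a ≠ 0) (hψd : ∀ a : ZMod q, dft q (ψ e₀) a ≠ 0)
    (a : ZMod q) :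
    ((∑ x ∈ Finset.univ.filter (fun x : V → ZMod q => x (s e₀) - x (t e₀) = a),
        (∏ e : E, ψ e (x (s e) - x (t e))) * ∏ v : V, φ v (x v)) / Zp s t q ψ φ) / ψ e₀ a =
      ∑ a' : ZMod q,
        (((∑ yt ∈ Finset.univ.filter (fun yt : E → ZMod q => yt e₀ = a'),
            (∏ e : E, dft q (ψ e) (yt e)) * ∏ v : V, dft q (φ v) (dualX s t q yt v)) /
              Zd s t q ψ φ) / dft q (ψ e₀) a') * omegaPow q a a' := by
  have hq : (q : ℂ) ≠ 0 := Nat.cast_ne_zero.mpr (NeZero.ne q)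
  have hqn : (q : ℂ) ^ (Fintype.card E) ≠ 0 := pow_ne_zero _ hq
  set R : ZMod q → ℂ := fun c =>
    ∑ x ∈ Finset.univ.filter (fun x : V → ZMod q => x (s e₀) - x (t e₀) = c),
      (∏ e ∈ Finset.univ.erase e₀, ψ e (x (s e) - x (t e))) * ∏ v : V, φ v (x v) with hR
  have hZd : Zd s t q ψ φ = (q:ℂ) ^ (Fintype.card E) * Zp s t q ψ φ := Zd_eq_Zp s t q ψ φ
  -- LHS
  have hLHS : ((∑ x ∈ Finset.univ.filter (fun x : V → ZMod q => x (s e₀) - x (t e₀) = a),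
        (∏ e : E, ψ e (x (s e) - x (t e))) * ∏ v : V, φ v (x v)) / Zp s t q ψ φ) / ψ e₀ a
      = R a / Zp s t q ψ φ := by
    rw [Np_eq s t q ψ φ e₀ a]
    rw [mul_div_assoc, mul_comm, mul_div_assoc, div_self (hψ a), mul_one]
  rw [hLHS]
  symm
  -- Nd formula
  have hNd : ∀ a' : ZMod q,
      (∑ yt ∈ Finset.univ.filter (fun yt : E → ZMod q => yt e₀ = a'),
        (∏ e : E, dft q (ψ e) (yt e)) * ∏ v : V, dft q (φ v) (dualX s t q yt v))
      = (q:ℂ) ^ (Fintype.card E) * ((dft q (ψ e₀) a' / q) *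
          ∑ c : ZMod q, chi q (-(c * a')) * R c) := by
    intro a'
    rw [Nd_eq s t q ψ φ e₀ a', Zd_eq_Zp, Zp_update]
    congr 1
    rw [Finset.mul_sum]
    refine Finset.sum_congr rfl (fun c _ => ?_)
    rw [hker]
    ring
  calc ∑ a' : ZMod q,
        (((∑ yt ∈ Finset.univ.filter (fun yt : E → ZMod q => yt e₀ = a'),
            (∏ e : E, dft q (ψ e) (yt e)) * ∏ v : V, dft q (φ v) (dualX s t q yt v)) /
              Zd s t q ψ φ) / dft q (ψ e₀) a') * omegaPow q a a'
      = ∑ a' : ZMod q,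
          (∑ c : ZMod q, chi q ((a - c) * a') * R c) / ((q:ℂ) * Zp s t q ψ φ) := by
        refine Finset.sum_congr rfl (fun a' _ => ?_)
        rw [hNd a', hZd, omega_eq]
        have hsum : ∀ c : ZMod q, chi q ((a - c) * a') * R c
            = chi q (-(c * a')) * R c * chi q (a * a') := by
          intro c
          have : (a - c) * a' = -(c * a') + a * a' := by ring
          rw [this, chi_add]
          ring
        simp only [hsum]
        rw [← Finset.sum_mul]
        field_simp [hψd a']
    _ = (∑ c : ZMod q, (∑ a' : ZMod q, chi q ((a - c) * a')) * R c)
          / ((q:ℂ) * Zp s t q ψ φ) := by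
        rw [← Finset.sum_div, Finset.sum_comm]
        congr 1
        refine Finset.sum_congr rfl (fun c _ => ?_)
        rw [Finset.sum_mul]
    _ = R a / Zp s t q ψ φ := by
        have : ∀ c : ZMod q, (∑ a' : ZMod q, chi q ((a - c) * a')) * R c
            = (if a - c = 0 then (q:ℂ) else 0) * R c := by
          intro c
          rw [sum_chi_mul]
        simp only [this]
        rw [Finset.sum_eq_single a]
        · rw [sub_self, if_pos rfl, mul_comm, mul_div_assoc]
          rw [show (q:ℂ) / ((q:ℂ) * Zp s t q ψ φ) = 1 / Zp s t q ψ φ by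
                rw [div_mul_eq_div_div, div_self hq]]
          rw [mul_one_div]
        · intro c _ hc
          rw [if_neg (sub_ne_zero.mpr (Ne.symm hc)), zero_mul]
        · intro h
          exact absurd (Finset.mem_univ a) h
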